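/- In the Bayesian probit regression setup, suppose that for every polynomial function t : ℝ^p → ℝ one has ∫_{ℝ^p} |t(β)| p(β,β) dβ < ∞, where p(β,β) = ∫_{ℝ^n} π_{U|V}(β|z) π_{V|U}(z|β) dz. Let ψ be the density of a p-variate t-distribution: ψ(β) = c · (1 + (1/a)(β − b)ᵀ Σ⁻¹ (β − b))^{−(a+p)/2} for some b ∈ ℝ^p, positive definite Σ ∈ ℝ^{p×p}, positive integer a, and normalizing constant c > 0. Then ∫_{ℝ^p} ∫_{ℝ^n} π_{U|V}(β|z)³ π_{V|U}(z|β) / ψ(β)² dz dβ < ∞ (so the dual Monte Carlo estimator of s_k based on ψ has finite variance). -/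

import Mathlib

open MeasureTheory Matrix

/-- In the Bayesian probit regression setup (Albert–Chib DA chain),
if `∫ |t(β)| p(β,β) dβ < ∞` for every polynomial `t`, and `ψ` is a `p`-variate
t-distribution density, then
`∫∫ π_{U|V}(β|z)³ π_{V|U}(z|β) / ψ(β)² dz dβ < ∞`, so the dual Monte Carlo
estimator of `s_k` based on `ψ` has finite variance. -/
theorem probit_dual_estimator_finite_variance
    (n p : ℕ) (X : Matrix (Fin n) (Fin p) ℝ) (y : Fin n → ℝ)
    (hy : ∀ i, y i = 0 ∨ y i = 1)
    (w : Fin p → ℝ) (Q : Matrix (Fin p) (Fin p) ℝ) (hQ : Q.PosDef)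
    (piBeta : (Fin n → ℝ) → (Fin p → ℝ) → ℝ)
    (hpiBeta : ∀ (z : Fin n → ℝ) (β : Fin p → ℝ), piBeta z β =
      Real.sqrt (Xᵀ * X + Q).det / (2 * Real.pi) ^ ((p : ℝ) / 2) *
        Real.exp (-(1 / 2) * ((β - (Xᵀ * X + Q)⁻¹ *ᵥ (w + Xᵀ *ᵥ z)) ⬝ᵥ
          ((Xᵀ * X + Q) *ᵥ (β - (Xᵀ * X + Q)⁻¹ *ᵥ (w + Xᵀ *ᵥ z))))))
    (piZ : (Fin p → ℝ) → (Fin n → ℝ) → ℝ)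
    (hpiZ : ∀ (β : Fin p → ℝ) (z : Fin n → ℝ), piZ β z = ∏ i,
      (Real.exp (-(z i - (X *ᵥ β) i) ^ 2 / 2) *
          (if 0 < (y i - 1 / 2) * z i then 1 else 0)) /
        (∫ t : ℝ, Real.exp (-(t - (X *ᵥ β) i) ^ 2 / 2) *
          (if 0 < (y i - 1 / 2) * t then 1 else 0)))
    (pdiag : (Fin p → ℝ) → ℝ)
    (hpdiag : ∀ β : Fin p → ℝ, pdiag β = ∫ z : Fin n → ℝ, piBeta z β * piZ β z)
    (hpoly : ∀ t : MvPolynomial (Fin p) ℝ,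
      ∫⁻ β : Fin p → ℝ, ENNReal.ofReal (|MvPolynomial.eval β t| * pdiag β) < ⊤)
    (b : Fin p → ℝ) (S : Matrix (Fin p) (Fin p) ℝ) (hS : S.PosDef)
    (a : ℕ) (ha : 0 < a) (c : ℝ) (hc : 0 < c)
    (psi : (Fin p → ℝ) → ℝ)
    (hpsi : ∀ β : Fin p → ℝ, psi β =
      c * (1 + (1 / (a : ℝ)) * ((β - b) ⬝ᵥ (S⁻¹ *ᵥ (β - b)))) ^
        (-(((a : ℝ) + p) / 2))) :
    ∫⁻ β : Fin p → ℝ, ∫⁻ z : Fin n → ℝ,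
      ENNReal.ofReal (piBeta z β ^ 3 * piZ β z / psi β ^ 2) < ⊤ := by
  classical
  have hMsd : (Xᵀ * X + Q).PosSemidef := by
    have h1 : (Xᵀ * X).PosSemidef := by
      have := Matrix.posSemidef_conjTranspose_mul_self X
      simpa [Matrix.conjTranspose_eq_transpose_of_trivial] using this
    exact h1.add hQ.posSemidef
  set C : ℝ := Real.sqrt (Xᵀ * X + Q).det / (2 * Real.pi) ^ ((p : ℝ) / 2) with hCdef
  have hC0 : 0 ≤ C := div_nonneg (Real.sqrt_nonneg _)
    (Real.rpow_nonneg (by positivity) _)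
  have hpiBeta_nonneg : ∀ z β, 0 ≤ piBeta z β := fun z β => by
    rw [hpiBeta]
    exact mul_nonneg hC0 (Real.exp_nonneg _)
  have hpiBeta_le : ∀ z β, piBeta z β ≤ C := fun z β => by
    rw [hpiBeta]
    have hqf : 0 ≤ (β - (Xᵀ * X + Q)⁻¹ *ᵥ (w + Xᵀ *ᵥ z)) ⬝ᵥ
        ((Xᵀ * X + Q) *ᵥ (β - (Xᵀ * X + Q)⁻¹ *ᵥ (w + Xᵀ *ᵥ z))) := by
      simpa using hMsd.dotProduct_mulVec_nonneg (β - (Xᵀ * X + Q)⁻¹ *ᵥ (w + Xᵀ *ᵥ z))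
    calc C * Real.exp (-(1 / 2) * ((β - (Xᵀ * X + Q)⁻¹ *ᵥ (w + Xᵀ *ᵥ z)) ⬝ᵥ
          ((Xᵀ * X + Q) *ᵥ (β - (Xᵀ * X + Q)⁻¹ *ᵥ (w + Xᵀ *ᵥ z)))))
        ≤ C * 1 := by
          apply mul_le_mul_of_nonneg_left _ hC0
          rw [Real.exp_le_one_iff]
          nlinarith
      _ = C := mul_one C
  have hite_nonneg : ∀ (r : ℝ), (0:ℝ) ≤ (if 0 < r then (1:ℝ) else 0) := by
    intro r; split <;> norm_num
  have hpiZ_nonneg : ∀ β z, 0 ≤ piZ β z := fun β z => by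
    rw [hpiZ]
    refine Finset.prod_nonneg fun i _ => div_nonneg
      (mul_nonneg (Real.exp_nonneg _) (hite_nonneg _)) ?_
    exact integral_nonneg fun t => mul_nonneg (Real.exp_nonneg _) (hite_nonneg _)
  -- the quadratic form of the t-density
  have hq0 : ∀ β : Fin p → ℝ, 0 ≤ (β - b) ⬝ᵥ (S⁻¹ *ᵥ (β - b)) := fun β => by
    simpa using hS.inv.posSemidef.dotProduct_mulVec_nonneg (β - b)
  set u : (Fin p → ℝ) → ℝ := fun β => 1 + (1 / (a : ℝ)) * ((β - b) ⬝ᵥ (S⁻¹ *ᵥ (β - b)))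
    with hudef
  have hu1 : ∀ β, (1:ℝ) ≤ u β := fun β =>
    le_add_of_nonneg_right (mul_nonneg (by positivity) (hq0 β))
  have hu0 : ∀ β, (0:ℝ) < u β := fun β => lt_of_lt_of_le one_pos (hu1 β)
  have hpsisq : ∀ β, psi β ^ 2 = c ^ 2 * ((u β) ^ (a + p))⁻¹ := fun β => by
    rw [hpsi, mul_pow]
    congr 1
    rw [← Real.rpow_natCast ((u β) ^ (-(((a:ℝ) + p) / 2))) 2, ← Real.rpow_mul (hu0 β).le,
      show (-(((a:ℝ) + p) / 2) * ((2:ℕ):ℝ)) = -(((a + p : ℕ)):ℝ) by push_cast; ring,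
      Real.rpow_neg (hu0 β).le, Real.rpow_natCast]
  set K : (Fin p → ℝ) → ℝ := fun β => C ^ 2 / c ^ 2 * (u β) ^ (a + p) with hKdef
  have hK0 : ∀ β, 0 ≤ K β := fun β =>
    mul_nonneg (by positivity) (pow_nonneg (hu0 β).le _)
  have hbound : ∀ β z,
      piBeta z β ^ 3 * piZ β z / psi β ^ 2 ≤ K β * (piBeta z β * piZ β z) := by
    intro β z
    rw [hpsisq, div_eq_mul_inv, mul_inv, inv_inv]
    have h0 := hpiBeta_nonneg z β
    have hz := hpiZ_nonneg β z
    have h2 : piBeta z β ^ 2 ≤ C ^ 2 := pow_le_pow_left₀ h0 (hpiBeta_le z β) 2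
    have h3 : piBeta z β ^ 3 * piZ β z ≤ C ^ 2 * (piBeta z β * piZ β z) := by
      calc piBeta z β ^ 3 * piZ β z = piBeta z β ^ 2 * (piBeta z β * piZ β z) := by ring
        _ ≤ C ^ 2 * (piBeta z β * piZ β z) :=
          mul_le_mul_of_nonneg_right h2 (mul_nonneg h0 hz)
    have hfac : 0 ≤ (c ^ 2)⁻¹ * (u β) ^ (a + p) := by
      have := (hu0 β).le
      positivity
    calc piBeta z β ^ 3 * piZ β z * ((c ^ 2)⁻¹ * (u β) ^ (a + p))
        ≤ C ^ 2 * (piBeta z β * piZ β z) * ((c ^ 2)⁻¹ * (u β) ^ (a + p)) :=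
          mul_le_mul_of_nonneg_right h3 hfac
      _ = K β * (piBeta z β * piZ β z) := by rw [hKdef]; ring
  -- the polynomial
  set T : MvPolynomial (Fin p) ℝ :=
    MvPolynomial.C (C ^ 2 / c ^ 2) *
      (1 + MvPolynomial.C (1 / (a : ℝ)) * ∑ i, ∑ j, MvPolynomial.C (S⁻¹ i j) *
        (MvPolynomial.X i - MvPolynomial.C (b i)) *
        (MvPolynomial.X j - MvPolynomial.C (b j))) ^ (a + p) with hTdef
  have hTeval : ∀ β, MvPolynomial.eval β T = K β := by
    intro β
    have hq' : (β - b) ⬝ᵥ (S⁻¹ *ᵥ (β - b)) =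
        ∑ i, ∑ j, S⁻¹ i j * (β i - b i) * (β j - b j) := by
      simp only [dotProduct, mulVec, Pi.sub_apply, Finset.mul_sum]
      exact Finset.sum_congr rfl fun i _ => Finset.sum_congr rfl fun j _ => by ring
    simp only [hTdef, _root_.map_mul, map_pow, _root_.map_add, _root_.map_one, map_sum, _root_.map_sub,
      MvPolynomial.eval_C, MvPolynomial.eval_X, hKdef, hudef, hq']
  -- integrability of the diagonal integrand
  have hint : ∀ β, Integrable (fun z : Fin n → ℝ => piBeta z β * piZ β z) := by
    intro β
    have hgi : ∀ i : Fin n, Integrable (fun t : ℝ =>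
        (Real.exp (-(t - (X *ᵥ β) i) ^ 2 / 2) *
          (if 0 < (y i - 1 / 2) * t then 1 else 0)) /
        (∫ s : ℝ, Real.exp (-(s - (X *ᵥ β) i) ^ 2 / 2) *
          (if 0 < (y i - 1 / 2) * s then 1 else 0))) := by
      intro i
      apply Integrable.div_const
      have hexp : Integrable (fun t : ℝ => Real.exp (-(t - (X *ᵥ β) i) ^ 2 / 2)) := by
        have h := (integrable_exp_neg_mul_sq (by norm_num : (0:ℝ) < 1/2)).comp_sub_right
          ((X *ᵥ β) i)
        refine h.congr (Filter.Eventually.of_forall fun t => ?_)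
        exact Real.exp_eq_exp.2 (by ring)
      have hmeas : AEStronglyMeasurable
          (fun t : ℝ => if 0 < (y i - 1 / 2) * t then (1:ℝ) else 0) volume := by
        apply Measurable.aestronglyMeasurable
        exact Measurable.ite
          (measurableSet_lt measurable_const (measurable_const.mul measurable_id))
          measurable_const measurable_const
      have hmul : Integrable (fun t : ℝ =>
          (if 0 < (y i - 1 / 2) * t then (1:ℝ) else 0) *
            Real.exp (-(t - (X *ᵥ β) i) ^ 2 / 2)) :=
        hexp.bdd_mul (c := 1) hmeas (Filter.Eventually.of_forall fun t => by split <;> simp)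
      exact hmul.congr (Filter.Eventually.of_forall fun t => by ring)
    have hprod : Integrable (fun z : Fin n → ℝ => piZ β z) :=
      (Integrable.fintype_prod hgi).congr
        (Filter.Eventually.of_forall fun z => (hpiZ β z).symm)
    have hmeasb : AEStronglyMeasurable (fun z : Fin n → ℝ => piBeta z β) volume := by
      apply Continuous.aestronglyMeasurable
      have heq : (fun z : Fin n → ℝ => piBeta z β) = fun z =>
          C * Real.exp (-(1 / 2) * ((β - (Xᵀ * X + Q)⁻¹ *ᵥ (w + Xᵀ *ᵥ z)) ⬝ᵥ
            ((Xᵀ * X + Q) *ᵥ (β - (Xᵀ * X + Q)⁻¹ *ᵥ (w + Xᵀ *ᵥ z))))) :=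
        funext fun z => hpiBeta z β
      rw [heq]
      simp only [dotProduct, mulVec, Pi.sub_apply, Pi.add_apply]
      fun_prop
    refine hprod.bdd_mul (c := C) hmeasb (Filter.Eventually.of_forall fun z => ?_)
    rw [Real.norm_eq_abs, abs_of_nonneg (hpiBeta_nonneg z β)]
    exact hpiBeta_le z β
  have hpd : ∀ β, ENNReal.ofReal (pdiag β)
      = ∫⁻ z : Fin n → ℝ, ENNReal.ofReal (piBeta z β * piZ β z) := by
    intro β
    rw [hpdiag]
    exact ofReal_integral_eq_lintegral_ofReal (hint β)
      (Filter.Eventually.of_forall fun z =>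
        mul_nonneg (hpiBeta_nonneg z β) (hpiZ_nonneg β z))
  have key : ∀ β : Fin p → ℝ,
      ∫⁻ z : Fin n → ℝ, ENNReal.ofReal (piBeta z β ^ 3 * piZ β z / psi β ^ 2)
        ≤ ENNReal.ofReal (|MvPolynomial.eval β T| * pdiag β) := by
    intro β
    calc ∫⁻ z : Fin n → ℝ, ENNReal.ofReal (piBeta z β ^ 3 * piZ β z / psi β ^ 2)
        ≤ ∫⁻ z : Fin n → ℝ, ENNReal.ofReal (K β * (piBeta z β * piZ β z)) :=
          lintegral_mono fun z => ENNReal.ofReal_le_ofReal (hbound β z)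
      _ = ∫⁻ z : Fin n → ℝ,
            ENNReal.ofReal (K β) * ENNReal.ofReal (piBeta z β * piZ β z) := by
          simp_rw [ENNReal.ofReal_mul (hK0 β)]
      _ = ENNReal.ofReal (K β) *
            ∫⁻ z : Fin n → ℝ, ENNReal.ofReal (piBeta z β * piZ β z) :=
          lintegral_const_mul' _ _ ENNReal.ofReal_ne_top
      _ = ENNReal.ofReal (K β) * ENNReal.ofReal (pdiag β) := by rw [hpd β]
      _ = ENNReal.ofReal (K β * pdiag β) := (ENNReal.ofReal_mul (hK0 β)).symm
      _ = ENNReal.ofReal (|MvPolynomial.eval β T| * pdiag β) := by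
          rw [hTeval β, abs_of_nonneg (hK0 β)]
  calc ∫⁻ β : Fin p → ℝ, ∫⁻ z : Fin n → ℝ,
        ENNReal.ofReal (piBeta z β ^ 3 * piZ β z / psi β ^ 2)
      ≤ ∫⁻ β : Fin p → ℝ, ENNReal.ofReal (|MvPolynomial.eval β T| * pdiag β) :=
        lintegral_mono key
    _ < ⊤ := hpoly T
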